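/- (Weighted SCAD coordinate update) Let λ > 0, γ > 2, z ∈ ℝ, and v > 1/(γ−1). The function β ↦ (v/2)β² − zβ + p_λ(|β|) attains its global minimum over ℝ at β̂ given by: β̂ = S(z, λ)/v if |z| ≤ λ(v+1); β̂ = S(z, γλ/(γ−1)) / (v − 1/(γ−1)) if λ(v+1) < |z| ≤ vγλ; and β̂ = z/v if |z| > vγλ, where S(z, λ) = sign(z)(|z| − λ)₊ is the soft-thresholding operator. -/

import Mathlib

noncomputable section

open Filter MeasureTheory ProbabilityTheory Matrix
open scoped BigOperators ENNReal

/-- The SCAD penalty `p_λ` with tuning parameters `lam = λ > 0`, `gam = γ > 2`. -/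
def scad (lam gam t : ℝ) : ℝ :=
  if |t| ≤ lam then lam * |t|
  else if |t| ≤ gam * lam then -((|t| ^ 2 - 2 * gam * lam * |t| + lam ^ 2) / (2 * (gam - 1)))
  else (gam + 1) * lam ^ 2 / 2

/-- The derivative of the SCAD penalty on `(0, ∞)`:
`p'_λ(t) = λ·[1{t ≤ λ} + ((γλ − t)₊/((γ−1)λ))·1{t > λ}]`. -/
def scadDeriv (lam gam t : ℝ) : ℝ :=
  lam * ((if t ≤ lam then (1 : ℝ) else 0) +
    max (gam * lam - t) 0 / ((gam - 1) * lam) * (if lam < t then (1 : ℝ) else 0))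

/-- The second derivative of the SCAD penalty on `(0, ∞)` (away from the knots). -/
def scadDeriv2 (lam gam t : ℝ) : ℝ :=
  if lam < t ∧ t ≤ gam * lam then -(1 / (gam - 1)) else 0

/-- The soft-thresholding operator `S(z, λ) = sign(z)(|z| − λ)₊`. -/
def softThresh (z lam : ℝ) : ℝ := Real.sign z * max (|z| - lam) 0

/-- The weighted SCAD coordinate update rule. -/
def scadCoordUpdate (lam gam v z : ℝ) : ℝ :=
  if |z| ≤ lam * (v + 1) then softThresh z lam / v
  else if |z| ≤ v * gam * lam then softThresh z (gam * lam / (gam - 1)) / (v - 1 / (gam - 1))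
  else z / v

lemma scad_abs (lam gam t : ℝ) : scad lam gam |t| = scad lam gam t := by
  simp [scad, abs_abs]

lemma scadCoordUpdate_neg (lam gam v z : ℝ) :
    scadCoordUpdate lam gam v (-z) = -(scadCoordUpdate lam gam v z) := by
  simp only [scadCoordUpdate, softThresh, abs_neg, Real.sign_neg]
  split_ifs <;> ring

/-- Key lemma, branch 1. -/
lemma keyA (lam gam w v a U : ℝ) (hlam : 0 < lam) (hgam : 2 < gam)
    (hv : 1 / (gam - 1) < v) (hw0 : 0 ≤ w) (hw1 : w ≤ lam * (v + 1)) (ha : 0 ≤ a)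
    (hU : v * U = max (w - lam) 0) :
    (v / 2) * U ^ 2 - w * U + scad lam gam U ≤ (v / 2) * a ^ 2 - w * a + scad lam gam a := by
  have hc : (0:ℝ) < gam - 1 := by linarith
  have hv0 : (0:ℝ) < v := lt_trans (by positivity) hv
  have hs : 0 < v * (gam - 1) - 1 := by
    have := (div_lt_iff₀ hc).mp hv
    linarith
  have h2c : (0:ℝ) < 2 * (gam - 1) := by linarith
  have haabs : |a| = a := abs_of_nonneg ha
  have hU0 : 0 ≤ U := by
    have h1 : v * 0 ≤ v * U := by rw [mul_zero, hU]; exact le_max_right _ _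
    exact le_of_mul_le_mul_left h1 hv0
  have hUlam : U ≤ lam := by
    have h1 : v * U ≤ v * lam := by
      rw [hU]; exact max_le (by nlinarith) (by positivity)
    exact le_of_mul_le_mul_left h1 hv0
  have hSU : 2 * (gam - 1) * scad lam gam U = 2 * (gam - 1) * (lam * U) := by
    simp only [scad, abs_of_nonneg hU0, if_pos hUlam]
  rcases le_or_gt w lam with hwl | hwl
  · -- U = 0
    have hU00 : U = 0 := by
      have : v * U = 0 := by rw [hU, max_eq_right (by linarith)]
      exact (mul_eq_zero.mp this).resolve_left (ne_of_gt hv0)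
    subst hU00
    refine le_of_mul_le_mul_left ?_ h2c
    rw [mul_add, mul_add, hSU]
    rcases le_or_gt a lam with h1 | h1
    · have hSa : 2 * (gam - 1) * scad lam gam a = 2 * (gam - 1) * (lam * a) := by
        simp only [scad, haabs, if_pos h1]
      rw [hSa]
      nlinarith [mul_nonneg (mul_nonneg hc.le (by linarith : (0:ℝ) ≤ lam - w)) ha,
        mul_nonneg (mul_nonneg hc.le hv0.le) (sq_nonneg a)]
    · rcases le_or_gt a (gam * lam) with h2 | h2
      · have hSa : 2 * (gam - 1) * scad lam gam a = -(a ^ 2 - 2 * gam * lam * a + lam ^ 2) := by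
          simp only [scad, haabs, if_neg (not_le.2 h1), if_pos h2]
          field_simp
        rw [hSa]
        nlinarith [mul_nonneg hs.le (sq_nonneg a),
          mul_nonneg (mul_nonneg hc.le ha) (by linarith : (0:ℝ) ≤ lam - w),
          mul_nonneg hlam.le (by linarith : (0:ℝ) ≤ a - lam), sq_nonneg lam]
      · have hSa : 2 * (gam - 1) * scad lam gam a = (gam - 1) * ((gam + 1) * lam ^ 2) := by
          simp only [scad, haabs, if_neg (not_le.2 h1), if_neg (not_le.2 h2)]
          ring
        rw [hSa]
        nlinarith [mul_nonneg hs.le (sq_nonneg a),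
          mul_nonneg (mul_nonneg hc.le ha) (by linarith : (0:ℝ) ≤ lam - w),
          sq_nonneg (a - (gam - 1) * lam), mul_nonneg hc.le (sq_nonneg lam)]
  · -- lam < w ≤ lam (v+1)
    have hU' : v * U = w - lam := by rw [hU, max_eq_left (by linarith)]
    have hw_eq : w = v * U + lam := by linarith
    subst hw_eq
    refine le_of_mul_le_mul_left ?_ h2c
    rw [mul_add, mul_add, hSU]
    rcases le_or_gt a lam with h1 | h1
    · have hSa : 2 * (gam - 1) * scad lam gam a = 2 * (gam - 1) * (lam * a) := by
        simp only [scad, haabs, if_pos h1]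
      rw [hSa]
      nlinarith [mul_nonneg (mul_nonneg hc.le hv0.le) (sq_nonneg (a - U))]
    · rcases le_or_gt a (gam * lam) with h2 | h2
      · have hSa : 2 * (gam - 1) * scad lam gam a = -(a ^ 2 - 2 * gam * lam * a + lam ^ 2) := by
          simp only [scad, haabs, if_neg (not_le.2 h1), if_pos h2]
          field_simp
        rw [hSa]
        nlinarith [mul_nonneg hs.le (sq_nonneg (a - U)),
          mul_nonneg (by linarith : (0:ℝ) ≤ lam - U) (by linarith : (0:ℝ) ≤ 2 * a - U - lam)]
      · have hSa : 2 * (gam - 1) * scad lam gam a = (gam - 1) * ((gam + 1) * lam ^ 2) := by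
          simp only [scad, haabs, if_neg (not_le.2 h1), if_neg (not_le.2 h2)]
          ring
        rw [hSa]
        linarith [mul_nonneg hs.le (sq_nonneg (a - U)),
          mul_nonneg (by linarith : (0:ℝ) ≤ lam - U) (by linarith : (0:ℝ) ≤ 2 * a - U - lam),
          sq_nonneg (a - gam * lam)]

/-- Key lemma, branch 2. -/
lemma keyB (lam gam w v a U : ℝ) (hlam : 0 < lam) (hgam : 2 < gam)
    (hv : 1 / (gam - 1) < v) (hw1 : lam * (v + 1) < w) (hw2 : w ≤ v * gam * lam) (ha : 0 ≤ a)
    (hU : (v * (gam - 1) - 1) * U = (gam - 1) * w - gam * lam) :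
    (v / 2) * U ^ 2 - w * U + scad lam gam U ≤ (v / 2) * a ^ 2 - w * a + scad lam gam a := by
  have hc : (0:ℝ) < gam - 1 := by linarith
  have hv0 : (0:ℝ) < v := lt_trans (by positivity) hv
  have hs : 0 < v * (gam - 1) - 1 := by
    have := (div_lt_iff₀ hc).mp hv
    linarith
  have h2c : (0:ℝ) < 2 * (gam - 1) := by linarith
  have haabs : |a| = a := abs_of_nonneg ha
  have hUlam : lam < U := by
    have h1 : (v * (gam - 1) - 1) * lam < (v * (gam - 1) - 1) * U := by
      rw [hU]; nlinarith
    exact lt_of_mul_lt_mul_left h1 hs.le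
  have hUgam : U ≤ gam * lam := by
    have h1 : (v * (gam - 1) - 1) * U ≤ (v * (gam - 1) - 1) * (gam * lam) := by
      rw [hU]; nlinarith
    exact le_of_mul_le_mul_left h1 hs
  have hU0 : 0 < U := lt_trans hlam hUlam
  have hSU : 2 * (gam - 1) * scad lam gam U = -(U ^ 2 - 2 * gam * lam * U + lam ^ 2) := by
    simp only [scad, abs_of_pos hU0, if_neg (not_le.2 hUlam), if_pos hUgam]
    field_simp
  have hUa : a * ((v * (gam - 1) - 1) * U) = a * ((gam - 1) * w - gam * lam) := by rw [hU]
  have hUU : U * ((v * (gam - 1) - 1) * U) = U * ((gam - 1) * w - gam * lam) := by rw [hU]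
  refine le_of_mul_le_mul_left ?_ h2c
  rw [mul_add, mul_add, hSU]
  rcases le_or_gt a lam with h1 | h1
  · have hSa : 2 * (gam - 1) * scad lam gam a = 2 * (gam - 1) * (lam * a) := by
      simp only [scad, haabs, if_pos h1]
    rw [hSa]
    nlinarith [mul_nonneg hs.le (sq_nonneg (a - U)), hUa, hUU, sq_nonneg (a - lam)]
  · rcases le_or_gt a (gam * lam) with h2 | h2
    · have hSa : 2 * (gam - 1) * scad lam gam a = -(a ^ 2 - 2 * gam * lam * a + lam ^ 2) := by
        simp only [scad, haabs, if_neg (not_le.2 h1), if_pos h2]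
        field_simp
      rw [hSa]
      nlinarith [mul_nonneg hs.le (sq_nonneg (a - U)), hUa, hUU]
    · have hSa : 2 * (gam - 1) * scad lam gam a = (gam - 1) * ((gam + 1) * lam ^ 2) := by
        simp only [scad, haabs, if_neg (not_le.2 h1), if_neg (not_le.2 h2)]
        ring
      rw [hSa]
      nlinarith [mul_nonneg hs.le (sq_nonneg (a - U)), hUa, hUU, sq_nonneg (a - gam * lam)]

/-- Key lemma, branch 3. -/
lemma keyC (lam gam w v a U : ℝ) (hlam : 0 < lam) (hgam : 2 < gam)
    (hv : 1 / (gam - 1) < v) (hw1 : v * gam * lam < w) (ha : 0 ≤ a)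
    (hU : v * U = w) :
    (v / 2) * U ^ 2 - w * U + scad lam gam U ≤ (v / 2) * a ^ 2 - w * a + scad lam gam a := by
  have hc : (0:ℝ) < gam - 1 := by linarith
  have hv0 : (0:ℝ) < v := lt_trans (by positivity) hv
  have hs : 0 < v * (gam - 1) - 1 := by
    have := (div_lt_iff₀ hc).mp hv
    linarith
  have h2c : (0:ℝ) < 2 * (gam - 1) := by linarith
  have haabs : |a| = a := abs_of_nonneg ha
  subst hU
  have hUgam : gam * lam < U := by
    have h1 : v * (gam * lam) < v * U := by nlinarith
    exact lt_of_mul_lt_mul_left h1 hv0.le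
  have hU0 : 0 < U := lt_trans (by positivity) hUgam
  have hlgl : lam < gam * lam := by nlinarith
  have hSU : 2 * (gam - 1) * scad lam gam U = (gam - 1) * ((gam + 1) * lam ^ 2) := by
    simp only [scad, abs_of_pos hU0, if_neg (not_le.2 (lt_trans hlgl hUgam)),
      if_neg (not_le.2 hUgam)]
    ring
  refine le_of_mul_le_mul_left ?_ h2c
  rw [mul_add, mul_add, hSU]
  rcases le_or_gt a lam with h1 | h1
  · have hSa : 2 * (gam - 1) * scad lam gam a = 2 * (gam - 1) * (lam * a) := by
      simp only [scad, haabs, if_pos h1]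
    rw [hSa]
    nlinarith [mul_nonneg hs.le (sq_nonneg (a - U)),
      mul_nonneg (by linarith : (0:ℝ) ≤ U - gam * lam)
        (by nlinarith : (0:ℝ) ≤ U + gam * lam - 2 * a),
      sq_nonneg (lam - a)]
  · rcases le_or_gt a (gam * lam) with h2 | h2
    · have hSa : 2 * (gam - 1) * scad lam gam a = -(a ^ 2 - 2 * gam * lam * a + lam ^ 2) := by
        simp only [scad, haabs, if_neg (not_le.2 h1), if_pos h2]
        field_simp
      rw [hSa]
      nlinarith [mul_nonneg hs.le (sq_nonneg (a - U)),
        mul_nonneg (by linarith : (0:ℝ) ≤ U - gam * lam)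
          (by linarith : (0:ℝ) ≤ U + gam * lam - 2 * a)]
    · have hSa : 2 * (gam - 1) * scad lam gam a = (gam - 1) * ((gam + 1) * lam ^ 2) := by
        simp only [scad, haabs, if_neg (not_le.2 h1), if_neg (not_le.2 h2)]
        ring
      rw [hSa]
      nlinarith [mul_nonneg (mul_nonneg hc.le hv0.le) (sq_nonneg (a - U))]

/-- Main auxiliary lemma for nonnegative `z`. -/
lemma aux_nonneg (lam gam z v : ℝ) (hlam : 0 < lam) (hgam : 2 < gam)
    (hv : 1 / (gam - 1) < v) (hz : 0 ≤ z) (β : ℝ) :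
    (v / 2) * (scadCoordUpdate lam gam v z) ^ 2 - z * (scadCoordUpdate lam gam v z) +
      scad lam gam |scadCoordUpdate lam gam v z| ≤
    (v / 2) * β ^ 2 - z * β + scad lam gam |β| := by
  have hc : (0:ℝ) < gam - 1 := by linarith
  have hv0 : (0:ℝ) < v := lt_trans (by positivity) hv
  have hs : 0 < v * (gam - 1) - 1 := by
    have := (div_lt_iff₀ hc).mp hv
    linarith
  have hvc : 0 < v - 1 / (gam - 1) := sub_pos.2 hv
  have hzabs : |z| = z := abs_of_nonneg hz
  have hst : ∀ t : ℝ, 0 ≤ t → softThresh z t = max (z - t) 0 := by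
    intro t ht
    rcases hz.eq_or_lt with h | h
    · rw [softThresh, ← h, Real.sign_zero, zero_mul, max_eq_right (by linarith)]
    · rw [softThresh, Real.sign_of_pos h, abs_of_pos h, one_mul]
  have hcomp : z * β ≤ z * |β| := mul_le_mul_of_nonneg_left (le_abs_self β) hz
  have hstep : ∀ U : ℝ,
      ((v / 2) * U ^ 2 - z * U + scad lam gam U ≤
        (v / 2) * |β| ^ 2 - z * |β| + scad lam gam |β|) →
      (v / 2) * U ^ 2 - z * U + scad lam gam |U| ≤
        (v / 2) * β ^ 2 - z * β + scad lam gam |β| := by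
    intro U h
    rw [scad_abs]
    refine le_trans h ?_
    rw [show |β| ^ 2 = β ^ 2 from sq_abs β]
    linarith
  simp only [scadCoordUpdate, hzabs, hst lam hlam.le,
    hst (gam * lam / (gam - 1)) (by positivity)]
  split_ifs with h1 h2
  · exact hstep _ (keyA lam gam z v |β| _ hlam hgam hv hz h1 (abs_nonneg β)
      (by field_simp))
  · refine hstep _ (keyB lam gam z v |β| _ hlam hgam hv (not_le.1 h1) h2 (abs_nonneg β) ?_)
    have hb : 0 ≤ z - gam * lam / (gam - 1) := by
      rw [sub_nonneg, div_le_iff₀ hc]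
      nlinarith [not_le.1 h1]
    rw [max_eq_left hb]
    field_simp
  · exact hstep _ (keyC lam gam z v |β| _ hlam hgam hv (not_le.1 h2) (abs_nonneg β)
      (by field_simp))

/-- **Weighted SCAD coordinate update.** For `λ > 0`, `γ > 2`, `z ∈ ℝ` and `v > 1/(γ−1)`, the
function `β ↦ (v/2)β² − zβ + p_λ(|β|)` attains its global minimum over `ℝ` at
`β̂ = S(z, λ)/v` if `|z| ≤ λ(v+1)`, `β̂ = S(z, γλ/(γ−1))/(v − 1/(γ−1))` if
`λ(v+1) < |z| ≤ vγλ`, and `β̂ = z/v` if `|z| > vγλ`. -/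
theorem scad_coord_update (lam gam z v : ℝ) (hlam : 0 < lam) (hgam : 2 < gam)
    (hv : 1 / (gam - 1) < v) :
    IsMinOn (fun beta : ℝ => (v / 2) * beta ^ 2 - z * beta + scad lam gam |beta|) Set.univ
      (scadCoordUpdate lam gam v z) := by
  rw [isMinOn_iff]
  intro β _
  rcases le_or_gt 0 z with hz | hz
  · exact aux_nonneg lam gam z v hlam hgam hv hz β
  · have h := aux_nonneg lam gam (-z) v hlam hgam hv (by linarith) (-β)
    rw [scadCoordUpdate_neg, abs_neg, abs_neg] at h
    nlinarith [h]
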